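/- Let Ω ⊆ ℝ^d be open, V ⊆ ℝ, and for i ∈ [N] let f_i : Ω → V be differentiable on Ω. Let Φ : V → ℝ be differentiable on V, strictly increasing, with Φ'(y) > 0 for all y ∈ V. Assume argmin_{θ∈Ω} Σ_{i=1}^N f_i(θ) exists and is unique; denote it θ*, and set w_i := 1/Φ'(f_i(θ*)). Suppose: (i) there is a bounded set S ⊆ Ω with bd(S) ⊆ Ω, θ* ∈ S, and for every i and every θ ∈ Ω∖S, f_i(θ) > f_i(θ*); (ii) for every θ ∈ Ω with θ ≠ θ*, there exists j ∈ [d] such that Σ_{i=1}^N w_i Φ'(f_i(θ)) · (∂f_i/∂θ_j)(θ) ≠ 0. Then argmin_{θ∈Ω} Σ_{i=1}^N w_i Φ(f_i(θ)) exists, is unique, and equals θ* = argmin_{θ∈Ω} Σ_{i=1}^N f_i(θ). -/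

import Mathlib

open Set Filter

/-- Lemma 1 of the paper, full form.
Let `Ω ⊆ ℝ^d` be open, `V ⊆ ℝ`, and for `i ∈ [N]` let `f i : Ω → V` be differentiable on `Ω`.
Let `Φ : V → ℝ` be differentiable on `V` (with derivative `Φ'`), strictly increasing, with
`Φ' y > 0` for all `y ∈ V`.  Assume `θ*` is the unique minimizer of `∑ i, f i` on `Ω`, and set
`w i := 1 / Φ' (f i θ*)`.  Suppose (i) there is a bounded set `S ⊆ Ω` with `frontier S ⊆ Ω`,
`θ* ∈ S`, and `f i θ > f i θ*` for every `i` and every `θ ∈ Ω \ S`; and (ii) for every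
`θ ∈ Ω` with `θ ≠ θ*` there is a coordinate `j` with
`∑ i, w i * Φ' (f i θ) * ∂(f i)/∂θ_j (θ) ≠ 0`.  Then the minimizer of
`∑ i, w i * Φ (f i θ)` over `Ω` exists, is unique, and equals `θ*`
(equivalently: `θ*` strictly minimizes this objective over `Ω`). -/
theorem implicit_mle_monotonic_transform
    {d N : ℕ}
    (Ω : Set (EuclideanSpace ℝ (Fin d))) (hΩ : IsOpen Ω)
    (V : Set ℝ)
    (f : Fin N → EuclideanSpace ℝ (Fin d) → ℝ)
    (hfV : ∀ i, ∀ θ ∈ Ω, f i θ ∈ V)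
    (hfdiff : ∀ i, DifferentiableOn ℝ (f i) Ω)
    (Φ : ℝ → ℝ) (Φ' : ℝ → ℝ)
    (hΦdiff : ∀ y ∈ V, HasDerivWithinAt Φ (Φ' y) V y)
    (hΦmono : StrictMonoOn Φ V)
    (hΦ'pos : ∀ y ∈ V, 0 < Φ' y)
    (θstar : EuclideanSpace ℝ (Fin d)) (hθstar : θstar ∈ Ω)
    (hmin : ∀ θ ∈ Ω, θ ≠ θstar → ∑ i, f i θstar < ∑ i, f i θ)
    (w : Fin N → ℝ) (hw : ∀ i, w i = 1 / Φ' (f i θstar))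
    (S : Set (EuclideanSpace ℝ (Fin d)))
    (hSsub : S ⊆ Ω) (hSbdd : Bornology.IsBounded S)
    (hSbd : frontier S ⊆ Ω) (hθS : θstar ∈ S)
    (hout : ∀ i, ∀ θ ∈ Ω \ S, f i θstar < f i θ)
    (hgrad : ∀ θ ∈ Ω, θ ≠ θstar → ∃ j : Fin d,
      ∑ i, w i * Φ' (f i θ) * (fderivWithin ℝ (f i) Ω θ (EuclideanSpace.single j 1)) ≠ 0) :
    ∀ θ ∈ Ω, θ ≠ θstar →
      ∑ i, w i * Φ (f i θstar) < ∑ i, w i * Φ (f i θ) := by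

  classical
  rcases eq_or_ne N 0 with hN | hN
  · subst hN
    intro θ hθ hne
    obtain ⟨j, hj⟩ := hgrad θ hθ hne
    simp at hj
  haveI : Nonempty (Fin N) := ⟨⟨0, Nat.pos_of_ne_zero hN⟩⟩
  set G : EuclideanSpace ℝ (Fin d) → ℝ := fun θ => ∑ i, w i * Φ (f i θ) with hG
  have hwpos : ∀ i, 0 < w i := fun i => by
    rw [hw i]; exact one_div_pos.mpr (hΦ'pos _ (hfV i θstar hθstar))
  -- derivative of G at points of Ω
  have hDG : ∀ θ ∈ Ω, HasFDerivAt G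
      (∑ i, (w i * Φ' (f i θ)) • fderivWithin ℝ (f i) Ω θ) θ := by
    intro θ hθ
    apply HasFDerivAt.fun_sum
    intro i _
    have hfi : HasFDerivAt (f i) (fderivWithin ℝ (f i) Ω θ) θ := by
      rw [fderivWithin_of_isOpen hΩ hθ]
      exact ((hfdiff i θ hθ).differentiableAt (hΩ.mem_nhds hθ)).hasFDerivAt
    have hcomp : HasFDerivWithinAt (Φ ∘ f i)
        (Φ' (f i θ) • fderivWithin ℝ (f i) Ω θ) Ω θ :=
      HasDerivWithinAt.comp_hasFDerivWithinAt θ (hΦdiff _ (hfV i θ hθ))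
        hfi.hasFDerivWithinAt (fun x hx => hfV i x hx)
    have hcomp' : HasFDerivAt (Φ ∘ f i)
        (Φ' (f i θ) • fderivWithin ℝ (f i) Ω θ) θ :=
      hcomp.hasFDerivAt (hΩ.mem_nhds hθ)
    have := hcomp'.const_mul (w i)
    simpa [Function.comp, mul_smul] using this
  -- criticality: any global minimizer on Ω must be θstar
  have crit : ∀ θ₀ ∈ Ω, (∀ θ ∈ Ω, G θ₀ ≤ G θ) → θ₀ = θstar := by
    intro θ₀ hθ₀ hminG
    by_contra hne
    obtain ⟨j, hj⟩ := hgrad θ₀ hθ₀ hne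
    have hloc : IsLocalMin G θ₀ :=
      Filter.eventually_of_mem (hΩ.mem_nhds hθ₀) hminG
    have hzero := hloc.hasFDerivAt_eq_zero (hDG θ₀ hθ₀)
    apply hj
    have := congrArg (fun L : EuclideanSpace ℝ (Fin d) →L[ℝ] ℝ =>
      L (EuclideanSpace.single j 1)) hzero
    simpa [ContinuousLinearMap.sum_apply, mul_assoc] using this
  -- outside S, G is strictly larger than at θstar
  have houtG : ∀ θ ∈ Ω \ S, G θstar < G θ := by
    intro θ hθ
    apply Finset.sum_lt_sum_of_nonempty Finset.univ_nonempty
    intro i _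
    exact mul_lt_mul_of_pos_left
      (hΦmono (hfV i θstar hθstar) (hfV i θ hθ.1) (hout i θ hθ)) (hwpos i)
  -- compactness of closure S
  have hKsub : closure S ⊆ Ω := by
    rw [closure_eq_self_union_frontier]
    exact Set.union_subset hSsub hSbd
  have hKcpt : IsCompact (closure S) :=
    Metric.isCompact_of_isClosed_isBounded isClosed_closure hSbdd.closure
  have hGcont : ContinuousOn G (closure S) := fun θ hθ =>
    ((hDG θ (hKsub hθ)).continuousAt).continuousWithinAt
  obtain ⟨θ₀, hθ₀K, hθ₀min⟩ :=
    hKcpt.exists_isMinOn ⟨θstar, subset_closure hθS⟩ hGcont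
  have hθ₀Ω : θ₀ ∈ Ω := hKsub hθ₀K
  have hglob : ∀ θ ∈ Ω, G θ₀ ≤ G θ := by
    intro θ hθ
    by_cases hθS' : θ ∈ closure S
    · exact hθ₀min hθS'
    · have h1 := houtG θ ⟨hθ, fun h => hθS' (subset_closure h)⟩
      have h2 : G θ₀ ≤ G θstar := hθ₀min (subset_closure hθS)
      linarith
  have hθ₀eq : θ₀ = θstar := crit θ₀ hθ₀Ω hglob
  have hGmin : ∀ θ ∈ Ω, G θstar ≤ G θ := hθ₀eq ▸ hglob
  intro θ hθ hne
  rcases lt_or_eq_of_le (hGmin θ hθ) with h | h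
  · exact h
  · exfalso
    refine hne (crit θ hθ fun θ' hθ' => ?_)
    rw [← h]; exact hGmin θ' hθ'
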